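/- For any invertible S ∈ ℝ^{r×r}, the condition number κ(S) = σ_1(S)/σ_r(S) satisfies κ(S) ≤ exp( R(S) / (√2 · σ_r(S)²) ), where R(S) = ‖SᵀS − (‖S‖_F²/r) I‖_F. -/

import Mathlib

open Matrix BigOperators

noncomputable def frob {m n : ℕ} (A : Matrix (Fin m) (Fin n) ℝ) : ℝ :=
  Real.sqrt (∑ i, ∑ j, (A i j) ^ 2)

noncomputable def finner {m n : ℕ} (A B : Matrix (Fin m) (Fin n) ℝ) : ℝ :=
  (Bᵀ * A).trace

noncomputable def Rreg {r : ℕ} (S : Matrix (Fin r) (Fin r) ℝ) : ℝ :=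
  frob (Sᵀ * S - ((frob S) ^ 2 / (r : ℝ)) • 1)

noncomputable def sv {r : ℕ} (S : Matrix (Fin r) (Fin r) ℝ) (i : Fin r) : ℝ :=
  Real.sqrt ((show (Sᵀ * S).IsHermitian by
    first
    | exact Matrix.IsSymm.isHermitian (Matrix.isSymm_transpose_mul_self S)
    | simpa using Matrix.isHermitian_conjTranspose_mul_self S).eigenvalues i)

noncomputable def gradR {r : ℕ} (S : Matrix (Fin r) (Fin r) ℝ) : Matrix (Fin r) (Fin r) ℝ :=
  (2 / Rreg S) • (S * (Sᵀ * S - ((frob S) ^ 2 / (r : ℝ)) • 1))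

lemma trace_herm {r : ℕ} (A : Matrix (Fin r) (Fin r) ℝ) (hA : A.IsHermitian) :
    A.trace = ∑ i, hA.eigenvalues i := by
  have hV := Matrix.UnitaryGroup.star_mul_self (Matrix.IsHermitian.eigenvectorUnitary hA)
  conv_lhs => rw [hA.spectral_theorem, Unitary.conjStarAlgAut_apply]
  rw [Matrix.trace_mul_cycle, hV, Matrix.one_mul, Matrix.trace_diagonal]
  simp

lemma trace_sq_herm {r : ℕ} (A : Matrix (Fin r) (Fin r) ℝ) (hA : A.IsHermitian) :
    (A * A).trace = ∑ i, hA.eigenvalues i ^ 2 := by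
  have hV := Matrix.UnitaryGroup.star_mul_self (Matrix.IsHermitian.eigenvectorUnitary hA)
  set V : Matrix (Fin r) (Fin r) ℝ := (Matrix.IsHermitian.eigenvectorUnitary hA : Matrix (Fin r) (Fin r) ℝ) with hVdef
  set D : Matrix (Fin r) (Fin r) ℝ := Matrix.diagonal (RCLike.ofReal ∘ hA.eigenvalues) with hDdef
  have key : (V * D * star V) * (V * D * star V) = V * (D * D) * star V := by
    rw [Matrix.mul_assoc (V*D) (star V), ← Matrix.mul_assoc (star V) (V*D) (star V),
      ← Matrix.mul_assoc (star V) V D, hV, Matrix.one_mul,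
      ← Matrix.mul_assoc (V*D) D (star V), Matrix.mul_assoc V D D]
  conv_lhs => rw [hA.spectral_theorem, Unitary.conjStarAlgAut_apply, key]
  rw [Matrix.trace_mul_cycle, hV, Matrix.one_mul, hDdef, Matrix.diagonal_mul_diagonal,
    Matrix.trace_diagonal]
  simp [sq]

lemma frob_sq {m n : ℕ} (A : Matrix (Fin m) (Fin n) ℝ) : frob A ^ 2 = (Aᵀ * A).trace := by
  rw [frob, Real.sq_sqrt (by positivity)]
  rw [Matrix.trace, Finset.sum_comm]
  simp [Matrix.diag, Matrix.mul_apply, sq]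

lemma frob_nonneg {m n : ℕ} (A : Matrix (Fin m) (Fin n) ℝ) : 0 ≤ frob A :=
  Real.sqrt_nonneg _

lemma eig_congr {r : ℕ} {A B : Matrix (Fin r) (Fin r) ℝ} (h : A = B)
    (hA : A.IsHermitian) (hB : B.IsHermitian) : hA.eigenvalues = hB.eigenvalues := by
  subst h; rfl

/-- frob² of a Hermitian real matrix shifted by `c•1` equals the sum of `(λ i - c)²`. -/
lemma frob_shift_sq {r : ℕ} (A : Matrix (Fin r) (Fin r) ℝ) (hA : A.IsHermitian) (c : ℝ) :
    frob (A - c • 1) ^ 2 = ∑ i, (hA.eigenvalues i - c) ^ 2 := by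
  have h1 : ((c : ℝ) • (1 : Matrix (Fin r) (Fin r) ℝ)).IsHermitian := by
    simp [Matrix.IsHermitian]
  have hM : (A - c • (1 : Matrix (Fin r) (Fin r) ℝ)).IsHermitian := hA.sub h1
  have hMt : (A - c • (1 : Matrix (Fin r) (Fin r) ℝ))ᵀ = A - c • 1 := by
    rw [← Matrix.conjTranspose_eq_transpose_of_trivial]
    exact hM.eq
  rw [frob_sq, hMt]
  have expand : (A - c • (1 : Matrix (Fin r) (Fin r) ℝ)) * (A - c • 1)
      = A * A - c • A - c • A + (c * c) • 1 := by
    simp only [Matrix.sub_mul, Matrix.mul_sub, Matrix.smul_mul, Matrix.mul_smul,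
      Matrix.one_mul, Matrix.mul_one, smul_smul]
    module
  rw [expand]
  rw [Matrix.trace_add, Matrix.trace_sub, Matrix.trace_sub, Matrix.trace_smul,
    Matrix.trace_smul, Matrix.trace_one, trace_sq_herm A hA, trace_herm A hA]
  have hexp : ∀ i : Fin r, (hA.eigenvalues i - c) ^ 2
      = hA.eigenvalues i ^ 2 - (2 * c) * hA.eigenvalues i + c ^ 2 := fun i => by ring
  simp_rw [hexp]
  rw [Finset.sum_add_distrib, Finset.sum_sub_distrib, ← Finset.mul_sum, Finset.sum_const,
    Finset.card_univ, Fintype.card_fin, nsmul_eq_mul]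
  simp only [smul_eq_mul]
  ring

theorem stmt5 {r : ℕ} (hr : 0 < r) (S : Matrix (Fin r) (Fin r) ℝ) (hS : IsUnit S) :
    (⨆ i, sv S i) / (⨅ i, sv S i)
      ≤ Real.exp (Rreg S / (Real.sqrt 2 * (⨅ i, sv S i) ^ 2)) := by
  haveI : Nonempty (Fin r) := ⟨⟨0, hr⟩⟩
  have hct : Sᴴ * S = Sᵀ * S := by
    rw [Matrix.conjTranspose_eq_transpose_of_trivial]
  have hH := Matrix.isHermitian_conjTranspose_mul_self S
  have hH' : (Sᵀ * S).IsHermitian := hct ▸ hH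
  set lam := hH.eigenvalues with hlam
  have heig : hH'.eigenvalues = lam := eig_congr hct.symm hH' hH
  -- positivity of eigenvalues
  have hdet : (Sᴴ * S).det ≠ 0 := by
    have hu : IsUnit S.det := hS.map Matrix.detMonoidHom
    rw [hct, Matrix.det_mul, Matrix.det_transpose]
    exact mul_ne_zero hu.ne_zero hu.ne_zero
  have hprod : ∏ i, lam i ≠ 0 := by
    have h := hH.det_eq_prod_eigenvalues
    rw [h] at hdet
    exact fun h0 => hdet (by rw [← h0]; rfl)
  have hlampos : ∀ i, 0 < lam i := by
    intro i
    rcases lt_or_eq_of_le (Matrix.eigenvalues_conjTranspose_mul_self_nonneg S i) with h | h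
    · exact h
    · exact absurd (Finset.prod_eq_zero (Finset.mem_univ i) h.symm) hprod
  have hsvpos : ∀ i, 0 < sv S i := fun i => Real.sqrt_pos.mpr (hlampos i)
  -- the sup and inf are attained
  obtain ⟨i₁, hi₁⟩ := Finite.exists_max (sv S)
  obtain ⟨i₂, hi₂⟩ := Finite.exists_min (sv S)
  have hsup : (⨆ i, sv S i) = sv S i₁ :=
    le_antisymm (ciSup_le hi₁) (le_ciSup (Finite.bddAbove_range _) i₁)
  have hinf : (⨅ i, sv S i) = sv S i₂ :=
    le_antisymm (ciInf_le (Finite.bddBelow_range _) i₂) (le_ciInf hi₂)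
  rw [hsup, hinf]
  set a := lam i₁ with ha
  set b := lam i₂ with hb
  have hapos : 0 < a := hlampos i₁
  have hbpos : 0 < b := hlampos i₂
  have hsv1 : sv S i₁ = Real.sqrt a := rfl
  have hsv2 : sv S i₂ = Real.sqrt b := rfl
  have hsv2sq : sv S i₂ ^ 2 = b := Real.sq_sqrt hbpos.le
  have hR0 : 0 ≤ Rreg S := frob_nonneg _
  -- key inequality: a - b ≤ √2 * Rreg S
  have hkey : a - b ≤ Real.sqrt 2 * Rreg S := by
    rcases eq_or_ne i₁ i₂ with h | h
    · rw [ha, hb, h, sub_self]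
      positivity
    · set c := frob S ^ 2 / (r : ℝ) with hc
      have hRsq : Rreg S ^ 2 = ∑ i, (lam i - c) ^ 2 := by
        rw [Rreg, ← hc, frob_shift_sq (Sᵀ * S) hH' c, heig]
      have hpair : (a - c) ^ 2 + (b - c) ^ 2 ≤ ∑ i, (lam i - c) ^ 2 := by
        calc (a - c) ^ 2 + (b - c) ^ 2
            = ∑ i ∈ ({i₁, i₂} : Finset (Fin r)), (lam i - c) ^ 2 := by rw [Finset.sum_pair h]
          _ ≤ ∑ i, (lam i - c) ^ 2 :=
              Finset.sum_le_sum_of_subset_of_nonneg (Finset.subset_univ _)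
                (fun i _ _ => sq_nonneg _)
      have hvar : (a - b) ^ 2 ≤ 2 * Rreg S ^ 2 := by
        rw [hRsq]
        nlinarith [hpair, sq_nonneg (a + b - 2 * c)]
      calc a - b ≤ Real.sqrt ((a - b) ^ 2) := by
            rw [Real.sqrt_sq_eq_abs]; exact le_abs_self _
        _ ≤ Real.sqrt (2 * Rreg S ^ 2) := Real.sqrt_le_sqrt hvar
        _ = Real.sqrt 2 * Rreg S := by
            rw [Real.sqrt_mul (by norm_num), Real.sqrt_sq hR0]
  -- main estimate
  have hdiv : sv S i₁ / sv S i₂ = Real.sqrt (a / b) := by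
    rw [hsv1, hsv2, ← Real.sqrt_div hapos.le]
  have hmain : Real.sqrt (a / b) ≤ Real.exp ((a - b) / (2 * b)) := by
    rw [show (a - b) / (2 * b) = ((a - b) / b) / 2 by ring, Real.exp_half]
    apply Real.sqrt_le_sqrt
    have h1 := Real.add_one_le_exp ((a - b) / b)
    have hab : a / b = (a - b) / b + 1 := by field_simp; ring
    rw [hab]; exact h1
  have h2 : Real.sqrt 2 * Real.sqrt 2 = 2 := Real.mul_self_sqrt (by norm_num)
  have harg : (a - b) / (2 * b) ≤ Rreg S / (Real.sqrt 2 * b) := by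
    rw [div_le_div_iff₀ (by positivity) (by positivity)]
    have h3 := mul_le_mul_of_nonneg_right hkey
      (by positivity : (0:ℝ) ≤ Real.sqrt 2 * b)
    have h4 : Real.sqrt 2 * Rreg S * (Real.sqrt 2 * b) = Rreg S * (2 * b) := by
      rw [show Real.sqrt 2 * Rreg S * (Real.sqrt 2 * b)
          = Real.sqrt 2 * Real.sqrt 2 * (Rreg S * b) by ring, h2]
      ring
    linarith [h3]
  calc sv S i₁ / sv S i₂ = Real.sqrt (a / b) := hdiv
    _ ≤ Real.exp ((a - b) / (2 * b)) := hmain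
    _ ≤ Real.exp (Rreg S / (Real.sqrt 2 * sv S i₂ ^ 2)) := by
        rw [hsv2sq]; exact Real.exp_le_exp.mpr harg
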